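/- Exponential diversity loss in branching length: in the product geometric model, let m = |{t ∈ {1,…,d} : v_t ≥ 2}|, let N ≥ 2 be an integer with v_t ≤ N for all t, let ε ∈ (0,1), and set c = min_{2 ≤ v ≤ N} Δ_v(ln(1/ε)). Then c > 0, and if P(V) ≥ 1 − ε then Div(P) ≤ exp(−m·c). -/

import Mathlib

open Finset

/-- The tilted distribution `p_{v,a}` on `{0,…,v−1}`:
`p_{v,a}(i) = exp(−a·i/v) / ∑_{j<v} exp(−a·j/v)`. -/
noncomputable def tiltedPMF (v : ℕ) (a : ℝ) (i : ℕ) : ℝ :=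
  Real.exp (-a * i / v) / ∑ j ∈ Finset.range v, Real.exp (-a * j / v)

/-- Shannon entropy (natural log) of the tilted distribution. -/
noncomputable def tiltedEntropy (v : ℕ) (a : ℝ) : ℝ :=
  -∑ i ∈ Finset.range v, tiltedPMF v a i * Real.log (tiltedPMF v a i)

/-- Entropy loss `Δ_v(a) = ln v − H_v(a)` relative to the uniform distribution. -/
noncomputable def entropyLoss (v : ℕ) (a : ℝ) : ℝ :=
  Real.log v - tiltedEntropy v a

/-- Product geometric distribution on `ℕ^d`: `P(y) = ∏_t (1−q_t)·q_t^{y_t}`. -/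
noncomputable def geomProd {d : ℕ} (q : Fin d → ℝ) (y : Fin d → ℕ) : ℝ :=
  ∏ t, (1 - q t) * q t ^ (y t)

/-- The valid set `V = {y ∈ ℕ^d : y_t < v_t for every t}` as a finite set. -/
def validSet {d : ℕ} (v : Fin d → ℕ) : Finset (Fin d → ℕ) :=
  Fintype.piFinset fun t => Finset.range (v t)

/-- Total probability mass `P(V)` of the valid set. -/
noncomputable def validMass {d : ℕ} (q : Fin d → ℝ) (v : Fin d → ℕ) : ℝ :=
  ∑ y ∈ validSet v, geomProd q y

/-- Shannon entropy of the conditional distribution `P(·|V)`. -/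
noncomputable def condEntropy {d : ℕ} (q : Fin d → ℝ) (v : Fin d → ℕ) : ℝ :=
  -∑ y ∈ validSet v,
      (geomProd q y / validMass q v) * Real.log (geomProd q y / validMass q v)

/-- Diversity `Div(P) = exp(H(P(·|V))) / |V|`. -/
noncomputable def diversity {d : ℕ} (q : Fin d → ℝ) (v : Fin d → ℕ) : ℝ :=
  Real.exp (condEntropy q v) / (validSet v).card




lemma gibbs_aux {s : Finset ℕ} {p q : ℕ → ℝ} (hp : ∀ i ∈ s, 0 < p i)
    (hq : ∀ i ∈ s, 0 < q i) :
    ∀ i ∈ s, p i * Real.log (q i) - p i * Real.log (p i) ≤ q i - p i := by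
  intro i hi
  have hpi := hp i hi
  have hqi := hq i hi
  have h1 : Real.log (q i / p i) ≤ q i / p i - 1 :=
    Real.log_le_sub_one_of_pos (div_pos hqi hpi)
  rw [Real.log_div hqi.ne' hpi.ne'] at h1
  have h2 := mul_le_mul_of_nonneg_left h1 hpi.le
  rw [mul_sub, mul_sub, mul_div_cancel₀ _ hpi.ne', mul_one] at h2
  linarith

lemma gibbs {s : Finset ℕ} {p q : ℕ → ℝ} (hp : ∀ i ∈ s, 0 < p i)
    (hq : ∀ i ∈ s, 0 < q i) (hpq : ∑ i ∈ s, q i ≤ ∑ i ∈ s, p i) :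
    ∑ i ∈ s, p i * Real.log (q i) ≤ ∑ i ∈ s, p i * Real.log (p i) := by
  have h := Finset.sum_le_sum (gibbs_aux hp hq)
  rw [Finset.sum_sub_distrib, Finset.sum_sub_distrib] at h
  linarith

lemma gibbs_strict {s : Finset ℕ} {p q : ℕ → ℝ} (hp : ∀ i ∈ s, 0 < p i)
    (hq : ∀ i ∈ s, 0 < q i) (hpq : ∑ i ∈ s, q i ≤ ∑ i ∈ s, p i)
    {i0 : ℕ} (hi0 : i0 ∈ s) (hne : p i0 ≠ q i0) :
    ∑ i ∈ s, p i * Real.log (q i) < ∑ i ∈ s, p i * Real.log (p i) := by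
  have h := Finset.sum_lt_sum (gibbs_aux hp hq) ⟨i0, hi0, by
    have hpi := hp i0 hi0
    have hqi := hq i0 hi0
    have h1 : Real.log (q i0 / p i0) < q i0 / p i0 - 1 := by
      refine Real.log_lt_sub_one_of_pos (div_pos hqi hpi) ?_
      intro h
      exact hne (by field_simp at h; linarith)
    rw [Real.log_div hqi.ne' hpi.ne'] at h1
    have h2 := mul_lt_mul_of_pos_left h1 hpi
    rw [mul_sub, mul_sub, mul_div_cancel₀ _ hpi.ne', mul_one] at h2
    linarith⟩
  rw [Finset.sum_sub_distrib, Finset.sum_sub_distrib] at h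
  linarith

lemma Zpos {v : ℕ} (hv : 1 ≤ v) (a : ℝ) :
    0 < ∑ j ∈ Finset.range v, Real.exp (-a * j / v) :=
  Finset.sum_pos (fun j _ => Real.exp_pos _) (by simp; omega)

lemma tiltedPMF_pos {v : ℕ} (hv : 1 ≤ v) (a : ℝ) (i : ℕ) : 0 < tiltedPMF v a i :=
  div_pos (Real.exp_pos _) (Zpos hv a)

lemma tiltedPMF_sum {v : ℕ} (hv : 1 ≤ v) (a : ℝ) :
    ∑ i ∈ Finset.range v, tiltedPMF v a i = 1 := by
  unfold tiltedPMF
  rw [← Finset.sum_div, div_self (Zpos hv a).ne']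

lemma tiltedPMF_log {v : ℕ} (hv : 1 ≤ v) (a : ℝ) (i : ℕ) :
    Real.log (tiltedPMF v a i)
      = -a * i / v - Real.log (∑ j ∈ Finset.range v, Real.exp (-a * j / v)) := by
  unfold tiltedPMF
  rw [Real.log_div (Real.exp_pos _).ne' (Zpos hv a).ne', Real.log_exp]

/-- cross entropy formula -/
lemma cross_entropy {v : ℕ} (hv : 1 ≤ v) (a b : ℝ) :
    -∑ i ∈ Finset.range v, tiltedPMF v b i * Real.log (tiltedPMF v a i)
      = (a / v) * (∑ i ∈ Finset.range v, tiltedPMF v b i * i)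
        + Real.log (∑ j ∈ Finset.range v, Real.exp (-a * j / v)) := by
  have : ∀ i ∈ Finset.range v, tiltedPMF v b i * Real.log (tiltedPMF v a i)
      = -((a / v) * (tiltedPMF v b i * i))
        - tiltedPMF v b i * Real.log (∑ j ∈ Finset.range v, Real.exp (-a * j / v)) := by
    intro i _
    rw [tiltedPMF_log hv a i]; ring
  rw [Finset.sum_congr rfl this, Finset.sum_sub_distrib, Finset.sum_neg_distrib,
    ← Finset.mul_sum, ← Finset.sum_mul, tiltedPMF_sum hv b]
  ring

lemma tiltedEntropy_eq {v : ℕ} (hv : 1 ≤ v) (a : ℝ) :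
    tiltedEntropy v a
      = (a / v) * (∑ i ∈ Finset.range v, tiltedPMF v a i * i)
        + Real.log (∑ j ∈ Finset.range v, Real.exp (-a * j / v)) :=
  cross_entropy hv a a

lemma tiltedEntropy_anti {v : ℕ} (hv : 1 ≤ v) {a b : ℝ} (ha : 0 ≤ a) (hab : a ≤ b) :
    tiltedEntropy v b ≤ tiltedEntropy v a := by
  rcases eq_or_lt_of_le hab with rfl | hab
  · exact le_refl _
  set Ea := ∑ i ∈ Finset.range v, tiltedPMF v a i * i with hEa
  set Eb := ∑ i ∈ Finset.range v, tiltedPMF v b i * i with hEb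
  set La := Real.log (∑ j ∈ Finset.range v, Real.exp (-a * j / v)) with hLa
  set Lb := Real.log (∑ j ∈ Finset.range v, Real.exp (-b * j / v)) with hLb
  have hvpos : (0:ℝ) < v := by exact_mod_cast hv
  -- Gibbs both ways
  have g1 : tiltedEntropy v b ≤ (a / v) * Eb + La := by
    rw [← cross_entropy hv a b]
    unfold tiltedEntropy
    have := gibbs (s := Finset.range v) (p := tiltedPMF v b) (q := tiltedPMF v a)
      (fun i _ => tiltedPMF_pos hv b i) (fun i _ => tiltedPMF_pos hv a i)
      (by rw [tiltedPMF_sum hv a, tiltedPMF_sum hv b])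
    linarith
  have g2 : tiltedEntropy v a ≤ (b / v) * Ea + Lb := by
    rw [← cross_entropy hv b a]
    unfold tiltedEntropy
    have := gibbs (s := Finset.range v) (p := tiltedPMF v a) (q := tiltedPMF v b)
      (fun i _ => tiltedPMF_pos hv a i) (fun i _ => tiltedPMF_pos hv b i)
      (by rw [tiltedPMF_sum hv a, tiltedPMF_sum hv b])
    linarith
  have e1 : tiltedEntropy v a = (a / v) * Ea + La := tiltedEntropy_eq hv a
  have e2 : tiltedEntropy v b = (b / v) * Eb + Lb := tiltedEntropy_eq hv b
  -- from g1,g2,e1,e2 : (b-a)/v * (Eb - Ea) ≤ 0 hence Eb ≤ Ea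
  have hAB : a / v < b / v := div_lt_div_of_pos_right hab hvpos
  have hEle : Eb ≤ Ea := by
    by_contra hlt
    push_neg at hlt
    nlinarith [mul_pos (sub_pos.mpr hAB) (sub_pos.mpr hlt)]
  calc tiltedEntropy v b ≤ (a / v) * Eb + La := g1
    _ ≤ (a / v) * Ea + La := by
        have : (a / v) * Eb ≤ (a / v) * Ea :=
          mul_le_mul_of_nonneg_left hEle (div_nonneg ha hvpos.le)
        linarith
    _ = tiltedEntropy v a := e1.symm

lemma entropyLoss_pos {v : ℕ} (hv : 2 ≤ v) {a : ℝ} (ha : 0 < a) :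
    0 < entropyLoss v a := by
  have hv1 : 1 ≤ v := by omega
  have hvpos : (0:ℝ) < v := by exact_mod_cast hv1
  -- compare with uniform distribution q i = 1/v
  have hne : tiltedPMF v a 0 ≠ tiltedPMF v a 1 := by
    unfold tiltedPMF
    intro h
    have hz := (Zpos hv1 a).ne'
    rw [div_eq_div_iff hz hz] at h
    have h2 := mul_right_cancel₀ hz h
    rw [Real.exp_eq_exp] at h2
    simp only [Nat.cast_zero, mul_zero, zero_div, Nat.cast_one, mul_one] at h2
    have : -a / (v:ℝ) < 0 := div_neg_of_neg_of_pos (by linarith) hvpos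
    linarith
  have key : ∑ i ∈ Finset.range v, tiltedPMF v a i * Real.log ((v:ℝ)⁻¹)
      < ∑ i ∈ Finset.range v, tiltedPMF v a i * Real.log (tiltedPMF v a i) := by
    have hsum : ∑ i ∈ Finset.range v, (fun _ : ℕ => (v:ℝ)⁻¹) i
        ≤ ∑ i ∈ Finset.range v, tiltedPMF v a i := by
      rw [tiltedPMF_sum hv1 a, Finset.sum_const, Finset.card_range]
      simp [hvpos.ne']
    have hqpos : ∀ i ∈ Finset.range v, (0:ℝ) < (fun _ : ℕ => (v:ℝ)⁻¹) i :=
      fun i _ => inv_pos.mpr hvpos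
    rcases ne_or_eq (tiltedPMF v a 0) ((v:ℝ)⁻¹) with h0 | h0
    · exact gibbs_strict (q := fun _ => (v:ℝ)⁻¹) (fun i _ => tiltedPMF_pos hv1 a i)
        hqpos hsum (Finset.mem_range.mpr (by omega)) h0
    · have h1 : tiltedPMF v a 1 ≠ (v:ℝ)⁻¹ := fun h => hne (h0.trans h.symm)
      exact gibbs_strict (q := fun _ => (v:ℝ)⁻¹) (fun i _ => tiltedPMF_pos hv1 a i)
        hqpos hsum (Finset.mem_range.mpr (by omega)) h1
  have hlhs : ∑ i ∈ Finset.range v, tiltedPMF v a i * Real.log ((v:ℝ)⁻¹)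
      = -Real.log v := by
    rw [← Finset.sum_mul, tiltedPMF_sum hv1 a, one_mul, Real.log_inv]
  unfold entropyLoss tiltedEntropy
  rw [hlhs] at key
  linarith

lemma entropyLoss_one (a : ℝ) : entropyLoss 1 a = 0 := by
  unfold entropyLoss tiltedEntropy tiltedPMF
  simp

lemma tiltedPMF_geom {v : ℕ} (hv : 1 ≤ v) {q : ℝ} (hq0 : 0 < q) (i : ℕ) :
    tiltedPMF v (-(v:ℝ) * Real.log q) i = q ^ i / ∑ j ∈ Finset.range v, q ^ j := by
  have hvne : (v:ℝ) ≠ 0 := by positivity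
  have key : ∀ k : ℕ, Real.exp (-(-(v:ℝ) * Real.log q) * k / v) = q ^ k := by
    intro k
    have h1 : -(-(v:ℝ) * Real.log q) * k / v = k * Real.log q := by
      field_simp
    rw [h1, Real.exp_nat_mul, Real.exp_log hq0]
  unfold tiltedPMF
  simp_rw [key]

lemma entropy_prod {d : ℕ} (v : Fin d → ℕ) (r : Fin d → ℕ → ℝ)
    (hpos : ∀ t, ∀ i ∈ Finset.range (v t), 0 < r t i)
    (hsum : ∀ t, ∑ i ∈ Finset.range (v t), r t i = 1) :
    ∑ y ∈ Fintype.piFinset (fun t => Finset.range (v t)),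
        (∏ t, r t (y t)) * Real.log (∏ t, r t (y t))
      = ∑ t, ∑ i ∈ Finset.range (v t), r t i * Real.log (r t i) := by
  have step1 : ∀ y ∈ Fintype.piFinset (fun t => Finset.range (v t)),
      (∏ t, r t (y t)) * Real.log (∏ t, r t (y t))
        = ∑ t, (∏ s, r s (y s)) * Real.log (r t (y t)) := by
    intro y hy
    rw [Real.log_prod
      (fun t _ => (hpos t (y t) (Fintype.mem_piFinset.mp hy t)).ne'), Finset.mul_sum]
  rw [Finset.sum_congr rfl step1, Finset.sum_comm]
  refine Finset.sum_congr rfl fun t _ => ?_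
  set g : Fin d → ℕ → ℝ := fun s i => r s i * (if s = t then Real.log (r s i) else 1) with hg
  have step2 : ∀ y ∈ Fintype.piFinset (fun t => Finset.range (v t)),
      (∏ s, r s (y s)) * Real.log (r t (y t)) = ∏ s, g s (y s) := by
    intro y _
    simp only [hg]
    rw [Finset.prod_mul_distrib]
    congr 1
    rw [Finset.prod_ite_eq' Finset.univ t (fun s => Real.log (r s (y s)))]
    simp
  rw [Finset.sum_congr rfl step2, ← Finset.prod_univ_sum]
  have step3 : ∀ s, (∑ i ∈ Finset.range (v s), g s i)
      = if s = t then ∑ i ∈ Finset.range (v t), r t i * Real.log (r t i) else 1 := by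
    intro s
    by_cases h : s = t
    · subst h; simp [hg]
    · simp [hg, h, hsum s]
  rw [Finset.prod_congr rfl (fun s _ => step3 s),
    Finset.prod_ite_eq' Finset.univ t
      (fun _ => ∑ i ∈ Finset.range (v t), r t i * Real.log (r t i))]
  simp

set_option maxHeartbeats 1000000 in
/-- Exponential diversity loss in branching length: in the product geometric model, with
`m = |{t : v_t ≥ 2}|`, an integer `N ≥ 2` bounding all `v_t`, `ε ∈ (0,1)`, and
`c = min_{2 ≤ v ≤ N} Δ_v(ln(1/ε))`, we have `c > 0`, and if `P(V) ≥ 1 − ε` then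
`Div(P) ≤ exp(−m·c)`. -/
theorem diversity_le_exp_neg_branching (d : ℕ) (hd : 1 ≤ d)
    (q : Fin d → ℝ) (hq : ∀ t, 0 < q t ∧ q t < 1)
    (v : Fin d → ℕ) (hv : ∀ t, 1 ≤ v t)
    (N : ℕ) (hN : 2 ≤ N) (hvN : ∀ t, v t ≤ N)
    (ε : ℝ) (hε : 0 < ε ∧ ε < 1)
    (m : ℕ) (hm : m = (Finset.univ.filter fun t : Fin d => 2 ≤ v t).card)
    (c : ℝ)
    (hc : c = (Finset.Icc 2 N).inf' (Finset.nonempty_Icc.mpr hN)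
        (fun w => entropyLoss w (Real.log (1 / ε)))) :
    0 < c ∧ (1 - ε ≤ validMass q v → diversity q v ≤ Real.exp (-(m : ℝ) * c)) := by
  obtain ⟨hε0, hε1⟩ := hε
  have hA : 0 < Real.log (1 / ε) := by
    apply Real.log_pos
    rw [lt_div_iff₀ hε0]; linarith
  have hApos := hA
  constructor
  · rw [hc]
    rw [Finset.lt_inf'_iff]
    intro w hw
    rw [Finset.mem_Icc] at hw
    exact entropyLoss_pos hw.1 hA
  intro hmass
  -- notation
  set a : Fin d → ℝ := fun t => -(v t : ℝ) * Real.log (q t) with ha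
  have hqpos : ∀ t, 0 < q t := fun t => (hq t).1
  have hq1 : ∀ t, q t < 1 := fun t => (hq t).2
  have hSpos : ∀ t, 0 < ∑ j ∈ Finset.range (v t), q t ^ j := by
    intro t
    apply Finset.sum_pos (fun j _ => pow_pos (hqpos t) j)
    simp only [Finset.nonempty_range_iff]
    exact Nat.one_le_iff_ne_zero.mp (hv t)
  -- the conditional marginal pmf
  set r : Fin d → ℕ → ℝ := fun t i => q t ^ i / ∑ j ∈ Finset.range (v t), q t ^ j with hr
  have hrpmf : ∀ t i, r t i = tiltedPMF (v t) (a t) i := by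
    intro t i
    rw [hr, ha, tiltedPMF_geom (hv t) (hqpos t)]
  have hrpos : ∀ t, ∀ i ∈ Finset.range (v t), 0 < r t i :=
    fun t i _ => div_pos (pow_pos (hqpos t) i) (hSpos t)
  have hrsum : ∀ t, ∑ i ∈ Finset.range (v t), r t i = 1 := by
    intro t
    rw [hr]
    rw [← Finset.sum_div, div_self (hSpos t).ne']
  -- factorization of validMass
  have hmassEq : validMass q v
      = ∏ t, ((1 - q t) * ∑ i ∈ Finset.range (v t), q t ^ i) := by
    calc validMass q v
        = ∑ y ∈ Fintype.piFinset (fun t => Finset.range (v t)),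
            ∏ t, ((1 - q t) * q t ^ (y t)) := by
          rw [validMass, validSet]; rfl
      _ = ∏ t, ∑ i ∈ Finset.range (v t), (1 - q t) * q t ^ i :=
          (Finset.prod_univ_sum (fun t => Finset.range (v t))
            (fun t i => (1 - q t) * q t ^ i)).symm
      _ = ∏ t, ((1 - q t) * ∑ i ∈ Finset.range (v t), q t ^ i) :=
          Finset.prod_congr rfl fun t _ => (Finset.mul_sum _ _ _).symm
  have hmasspos : 0 < validMass q v := by
    rw [hmassEq]
    exact Finset.prod_pos fun t _ => mul_pos (by linarith [hq1 t]) (hSpos t)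
  -- conditional pmf factorization
  have hcond : ∀ y ∈ validSet v,
      geomProd q y / validMass q v = ∏ t, r t (y t) := by
    intro y _
    rw [hmassEq, geomProd, ← Finset.prod_div_distrib]
    refine Finset.prod_congr rfl fun t _ => ?_
    rw [hr]
    rw [mul_div_mul_left _ _ (by linarith [hq1 t] : (1:ℝ) - q t ≠ 0)]
  -- condEntropy as sum
  have hCE : condEntropy q v = ∑ t, tiltedEntropy (v t) (a t) := by
    have hte : ∀ t, tiltedEntropy (v t) (a t)
        = -∑ i ∈ Finset.range (v t), r t i * Real.log (r t i) := by
      intro t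
      rw [tiltedEntropy]
      simp_rw [hrpmf t]
    calc condEntropy q v
        = -∑ y ∈ validSet v, (∏ t, r t (y t)) * Real.log (∏ t, r t (y t)) := by
          rw [condEntropy]
          congr 1
          exact Finset.sum_congr rfl fun y hy => by rw [hcond y hy]
      _ = -∑ t, ∑ i ∈ Finset.range (v t), r t i * Real.log (r t i) := by
          rw [validSet, entropy_prod v r hrpos hrsum]
      _ = ∑ t, tiltedEntropy (v t) (a t) := by
          rw [← Finset.sum_neg_distrib]
          exact Finset.sum_congr rfl fun t _ => (hte t).symm
  -- mass factor bound : q t ^ v t ≤ ε for all t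
  have hfac : ∀ t, (1 - q t) * ∑ i ∈ Finset.range (v t), q t ^ i
      = 1 - q t ^ (v t) := by
    intro t
    rw [geom_sum_eq (fun h => absurd (h ▸ hq1 t) (lt_irrefl 1))]
    have hne : q t - 1 ≠ 0 := by
      have := hq1 t; intro h; apply absurd this; push_neg; nlinarith
    field_simp
    ring
  have hqv : ∀ t, q t ^ (v t) ≤ ε := by
    intro t
    have hfle : validMass q v ≤ 1 - q t ^ (v t) := by
      rw [hmassEq]
      rw [← Finset.mul_prod_erase Finset.univ _ (Finset.mem_univ t), hfac t]
      have h1 : ∏ s ∈ Finset.univ.erase t,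
          ((1 - q s) * ∑ i ∈ Finset.range (v s), q s ^ i) ≤ 1 := by
        apply Finset.prod_le_one
        · intro s _; exact (mul_pos (by linarith [hq1 s]) (hSpos s)).le
        · intro s _
          rw [hfac s]
          have := pow_pos (hqpos s) (v s)
          linarith
      have h2 : (0:ℝ) ≤ 1 - q t ^ (v t) := by
        have := pow_le_one₀ (hqpos t).le (hq1 t).le (n := v t)
        linarith
      calc (1 - q t ^ (v t)) * ∏ s ∈ Finset.univ.erase t,
            ((1 - q s) * ∑ i ∈ Finset.range (v s), q s ^ i)
          ≤ (1 - q t ^ (v t)) * 1 := by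
            exact mul_le_mul_of_nonneg_left h1 h2
        _ = 1 - q t ^ (v t) := mul_one _
    linarith
  -- tilt parameter bound : a t ≥ log (1/ε)
  have haA : ∀ t, Real.log (1 / ε) ≤ a t := by
    intro t
    have h1 : Real.log (q t ^ (v t)) ≤ Real.log ε :=
      Real.log_le_log (pow_pos (hqpos t) _) (hqv t)
    rw [Real.log_pow] at h1
    rw [ha, one_div, Real.log_inv]
    push_cast at h1 ⊢
    linarith
  -- entropy loss bound per coordinate
  have hloss : ∀ t, 2 ≤ v t → c ≤ entropyLoss (v t) (a t) := by
    intro t ht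
    have h1 : c ≤ entropyLoss (v t) (Real.log (1 / ε)) := by
      rw [hc]
      exact Finset.inf'_le _ (Finset.mem_Icc.mpr ⟨ht, hvN t⟩)
    have h2 : entropyLoss (v t) (Real.log (1 / ε)) ≤ entropyLoss (v t) (a t) := by
      unfold entropyLoss
      have := tiltedEntropy_anti (hv t) hA.le (haA t)
      linarith
    linarith
  have hloss0 : ∀ t, ¬ (2 ≤ v t) → entropyLoss (v t) (a t) = 0 := by
    intro t ht
    have : v t = 1 := by have := hv t; omega
    rw [this, entropyLoss_one]
  -- sum bound
  have hsumloss : (m : ℝ) * c ≤ ∑ t, entropyLoss (v t) (a t) := by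
    rw [← Finset.sum_filter_add_sum_filter_not Finset.univ (fun t => 2 ≤ v t)]
    have h2 : ∑ t ∈ Finset.univ.filter (fun t => ¬ 2 ≤ v t),
        entropyLoss (v t) (a t) = 0 := by
      apply Finset.sum_eq_zero
      intro t ht
      exact hloss0 t (Finset.mem_filter.mp ht).2
    rw [h2, add_zero]
    have h1 : (m : ℝ) * c
        ≤ ∑ t ∈ Finset.univ.filter (fun t => 2 ≤ v t), entropyLoss (v t) (a t) := by
      have := Finset.card_nsmul_le_sum (Finset.univ.filter (fun t : Fin d => 2 ≤ v t))
        (fun t => entropyLoss (v t) (a t)) c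
        (fun t ht => hloss t (Finset.mem_filter.mp ht).2)
      rw [hm]
      simpa [nsmul_eq_mul] using this
    exact h1
  -- card of valid set
  have hcard : ((validSet v).card : ℝ) = ∏ t, (v t : ℝ) := by
    rw [validSet, Fintype.card_piFinset]
    push_cast
    refine Finset.prod_congr rfl fun t _ => by rw [Finset.card_range]
  have hcardpos : (0:ℝ) < (validSet v).card := by
    rw [hcard]
    exact Finset.prod_pos fun t _ => by exact_mod_cast hv t
  have hlogcard : Real.log ((validSet v).card : ℝ) = ∑ t, Real.log (v t) := by
    rw [hcard, Real.log_prod]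
    intro t _
    have := hv t
    positivity
  -- final computation
  have hdiv : diversity q v = Real.exp (condEntropy q v - Real.log ((validSet v).card)) := by
    rw [diversity, Real.exp_sub, Real.exp_log hcardpos]
  rw [hdiv, Real.exp_le_exp, hCE, hlogcard, ← Finset.sum_sub_distrib]
  have : ∑ t, (tiltedEntropy (v t) (a t) - Real.log (v t))
      = -∑ t, entropyLoss (v t) (a t) := by
    rw [← Finset.sum_neg_distrib]
    refine Finset.sum_congr rfl fun t _ => by rw [entropyLoss]; ring
  rw [this]
  linarith
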